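/- Superasymptotic (optimally truncated perturbative) expansion: there exist constants C > 0 and δ > 0 such that for all real λ with 0 < λ < δ, taking n(λ) := ⌊3/(2λ)⌋, one has |Z(λ) − Σ_{k=0}^{n(λ)−1} u_k(λ)| ≤ C e^{−3/(2λ)}. That is, truncating the divergent perturbative series of Z(λ) at index proportional to 1/λ (with optimal constant 3/2) leaves an exponentially small remainder. -/

import Mathlib

open MeasureTheory

noncomputable section

/-- The partition function of zero-dimensional φ⁴ theory. -/
def Z (lam : ℝ) : ℝ :=
  (1 / Real.sqrt (2 * Real.pi)) * ∫ φ : ℝ, Real.exp (-φ ^ 2 / 2 - (lam / 24) * φ ^ 4)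

/-- The k-th term of the perturbative expansion of `Z`. -/
def u (k : ℕ) (lam : ℝ) : ℝ :=
  (1 / Real.sqrt Real.pi) * ((-1) ^ k / (Nat.factorial k : ℝ)) *
    Real.Gamma (1 / 2 + 2 * k) * (lam / 6) ^ k

lemma exp_taylor_bound (n : ℕ) (x : ℝ) (hx : 0 ≤ x) :
    |Real.exp (-x) - ∑ k ∈ Finset.range n, (-x) ^ k / (Nat.factorial k : ℝ)|
      ≤ x ^ n / (Nat.factorial n : ℝ) := by
  induction n generalizing x with
  | zero =>
    simp only [Finset.range_zero, Finset.sum_empty, sub_zero, Nat.factorial_zero, pow_zero]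
    rw [abs_of_nonneg (Real.exp_pos _).le]
    have : Real.exp (-x) ≤ 1 := by
      rw [← Real.exp_zero]; exact Real.exp_le_exp.2 (by linarith)
    simpa using this
  | succ n ih =>
    set F : ℝ → ℝ := fun y => Real.exp (-y) - ∑ k ∈ Finset.range (n + 1),
      (-y) ^ k / (Nat.factorial k : ℝ) with hF
    have hF0 : F 0 = 0 := by
      simp [hF, Finset.sum_range_succ']
    have hderiv : ∀ y : ℝ, HasDerivAt F
        (-(Real.exp (-y) - ∑ k ∈ Finset.range n, (-y) ^ k / (Nat.factorial k : ℝ))) y := by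
      intro y
      have h1 : HasDerivAt (fun y : ℝ => Real.exp (-y)) (-Real.exp (-y)) y := by
        simpa using (hasDerivAt_neg y).exp
      have h2 : ∀ k : ℕ, HasDerivAt (fun y : ℝ => (-y) ^ k / (Nat.factorial k : ℝ))
          ((k : ℝ) * (-y) ^ (k - 1) * (-1) / (Nat.factorial k : ℝ)) y := by
        intro k
        exact (((hasDerivAt_pow k (-y)).comp y (hasDerivAt_neg y))).div_const _
      have h3 : HasDerivAt (fun y : ℝ => ∑ k ∈ Finset.range (n + 1),
          (-y) ^ k / (Nat.factorial k : ℝ))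
          (∑ k ∈ Finset.range (n + 1),
            (k : ℝ) * (-y) ^ (k - 1) * (-1) / (Nat.factorial k : ℝ)) y :=
        HasDerivAt.fun_sum fun k _ => h2 k
      have hsum : (∑ k ∈ Finset.range (n + 1),
          (k : ℝ) * (-y) ^ (k - 1) * (-1) / (Nat.factorial k : ℝ))
          = -∑ k ∈ Finset.range n, (-y) ^ k / (Nat.factorial k : ℝ) := by
        rw [Finset.sum_range_succ']
        simp only [Nat.cast_zero, zero_mul, Nat.factorial_zero, Nat.cast_one,
          zero_div, add_zero, ← Finset.sum_neg_distrib]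
        refine Finset.sum_congr rfl fun k _ => ?_
        have hfac : ((Nat.factorial (k + 1) : ℝ)) = (k + 1) * (Nat.factorial k : ℝ) := by
          push_cast [Nat.factorial_succ]; ring
        field_simp [hfac]
        rw [Nat.add_sub_cancel, hfac]; push_cast; ring
      have := h1.fun_sub h3
      rw [hsum] at this
      exact this.congr_deriv (by ring)
    have key : F x = ∫ t in (0:ℝ)..x,
        -(Real.exp (-t) - ∑ k ∈ Finset.range n, (-t) ^ k / (Nat.factorial k : ℝ)) := by
      rw [intervalIntegral.integral_eq_sub_of_hasDerivAt (fun t _ => hderiv t), hF0, sub_zero]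
      apply Continuous.intervalIntegrable
      fun_prop
    have hbnd : |F x| ≤ x ^ (n + 1) / (Nat.factorial (n + 1) : ℝ) := by
      rw [key, ← Real.norm_eq_abs]
      have h := intervalIntegral.norm_integral_le_of_norm_le
        (μ := volume) (a := (0:ℝ)) (b := x)
        (f := fun t => -(Real.exp (-t) - ∑ k ∈ Finset.range n, (-t) ^ k / (Nat.factorial k : ℝ)))
        (g := fun t => t ^ n / (Nat.factorial n : ℝ))
        hx ?_ ?_
      · refine h.trans ?_
        have hval : (∫ t in (0:ℝ)..x, t ^ n / (Nat.factorial n : ℝ))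
            = x ^ (n + 1) / (Nat.factorial (n + 1) : ℝ) := by
          rw [intervalIntegral.integral_div, integral_pow, Nat.factorial_succ]
          push_cast
          rw [zero_pow (by omega), sub_zero]
          field_simp
        rw [hval]
      · filter_upwards with t ht
        rw [Real.norm_eq_abs, abs_neg]
        exact ih t ht.1.le
      · apply Continuous.intervalIntegrable; fun_prop
    exact hbnd

lemma gauss_moment (n : ℕ) :
    ∫ x : ℝ, x ^ (4 * n) * Real.exp (-x ^ 2 / 2)
      = 4 ^ n * Real.sqrt 2 * Real.Gamma (2 * n + 1 / 2) := by
  have hfe : ∀ x : ℝ, |x| ^ (4 * n) * Real.exp (-|x| ^ 2 / 2)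
      = x ^ (4 * n) * Real.exp (-x ^ 2 / 2) := by
    intro x
    rw [show (4 * n) = 2 * (2 * n) by ring, pow_mul, pow_mul, sq_abs]
    ring
  have h1 : ∫ x : ℝ, x ^ (4 * n) * Real.exp (-x ^ 2 / 2)
      = 2 * ∫ x in Set.Ioi (0:ℝ), x ^ (4 * n) * Real.exp (-x ^ 2 / 2) := by
    rw [← integral_comp_abs (f := fun t : ℝ => t ^ (4 * n) * Real.exp (-t ^ 2 / 2))]
    exact (integral_congr_ae (Filter.Eventually.of_forall hfe)).symm
  have h2 : ∫ x in Set.Ioi (0:ℝ), x ^ (4 * n) * Real.exp (-x ^ 2 / 2)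
      = ∫ x in Set.Ioi (0:ℝ), x ^ ((4 * n : ℕ) : ℝ) * Real.exp (-(1/2) * x ^ (2:ℝ)) := by
    refine setIntegral_congr_fun measurableSet_Ioi fun x hx => ?_
    rw [Real.rpow_natCast, show ((2:ℝ)) = ((2:ℕ):ℝ) by norm_num, Real.rpow_natCast]
    ring_nf
  have h3 := integral_rpow_mul_exp_neg_mul_rpow (p := 2) (q := ((4 * n : ℕ) : ℝ))
    (b := 1/2) (by norm_num) (lt_of_lt_of_le (by norm_num) (Nat.cast_nonneg _)) (by norm_num)
  rw [h1, h2, h3]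
  have harg : (((4 * n : ℕ) : ℝ) + 1) / 2 = 2 * n + 1 / 2 := by push_cast; ring
  rw [harg]
  have hpow : ((1:ℝ)/2) ^ (-(((4 * n : ℕ) : ℝ) + 1) / 2) = 2 ^ (2 * n + 1/2 : ℝ) := by
    rw [one_div, Real.inv_rpow (by norm_num), ← Real.rpow_neg (by norm_num)]
    congr 1
    push_cast; ring
  rw [hpow, Real.rpow_add (by norm_num), show ((2:ℝ) * n : ℝ) = ((2 * n : ℕ) : ℝ) by push_cast; ring,
    Real.rpow_natCast, show (2:ℝ) ^ (2 * n) = 4 ^ n by rw [pow_mul]; norm_num,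
    show (2:ℝ) ^ ((1:ℝ)/2) = Real.sqrt 2 by rw [Real.sqrt_eq_rpow]]
  ring

lemma integrable_mom (k : ℕ) :
    Integrable (fun x : ℝ => x ^ (4 * k) * Real.exp (-x ^ 2 / 2)) := by
  have h := integrable_rpow_mul_exp_neg_mul_sq (b := 1/2) (by norm_num)
    (s := ((4 * k : ℕ) : ℝ)) (lt_of_lt_of_le (by norm_num) (Nat.cast_nonneg _))
  have he : (fun x : ℝ => x ^ ((4 * k : ℕ) : ℝ) * Real.exp (-(1/2) * x ^ 2))
      = fun x : ℝ => x ^ (4 * k) * Real.exp (-x ^ 2 / 2) := by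
    funext x; rw [Real.rpow_natCast]; ring_nf
  rwa [he] at h

lemma integrable_gauss : Integrable (fun x : ℝ => Real.exp (-x ^ 2 / 2)) := by
  simpa using integrable_mom 0

lemma integrable_Zfun (lam : ℝ) (hlam : 0 ≤ lam) :
    Integrable (fun x : ℝ => Real.exp (-x ^ 2 / 2 - (lam / 24) * x ^ 4)) := by
  refine integrable_gauss.mono' ((by fun_prop : Continuous fun x : ℝ => Real.exp (-x ^ 2 / 2 - lam / 24 * x ^ 4)).aestronglyMeasurable) ?_
  filter_upwards with x
  rw [Real.norm_eq_abs, abs_of_nonneg (Real.exp_pos _).le]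
  apply Real.exp_le_exp.2
  nlinarith [pow_le_pow_left₀ (le_refl (0:ℝ)) (le_refl (0:ℝ)) 1, sq_nonneg x,
    pow_nonneg (sq_nonneg x) 2, mul_nonneg (div_nonneg hlam (by norm_num : (0:ℝ) ≤ 24))
      (by positivity : (0:ℝ) ≤ x ^ 4)]

lemma remainder_bound (lam : ℝ) (hlam : 0 < lam) (n : ℕ) :
    |Z lam - ∑ k ∈ Finset.range n, u k lam| ≤
      1 / Real.sqrt Real.pi * (lam / 6) ^ n * Real.Gamma (2 * n + 1 / 2)
        / (Nat.factorial n : ℝ) := by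
  set f : ℝ → ℝ := fun x => Real.exp (-x ^ 2 / 2 - lam / 24 * x ^ 4) with hf
  set g : ℝ → ℝ := fun x => ∑ k ∈ Finset.range n,
    Real.exp (-x ^ 2 / 2) * ((-(lam / 24)) ^ k * x ^ (4 * k) / (Nat.factorial k : ℝ)) with hg
  have hgk : ∀ k : ℕ, Integrable (fun x : ℝ =>
      Real.exp (-x ^ 2 / 2) * ((-(lam / 24)) ^ k * x ^ (4 * k) / (Nat.factorial k : ℝ))) := by
    intro k
    have : (fun x : ℝ =>
        Real.exp (-x ^ 2 / 2) * ((-(lam / 24)) ^ k * x ^ (4 * k) / (Nat.factorial k : ℝ)))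
        = fun x : ℝ => ((-(lam / 24)) ^ k / (Nat.factorial k : ℝ)) *
          (x ^ (4 * k) * Real.exp (-x ^ 2 / 2)) := by
      funext x; ring
    rw [this]
    exact (integrable_mom k).const_mul _
  have hgint : Integrable g := by
    rw [hg]
    exact integrable_finset_sum _ fun k _ => hgk k
  have hfint : Integrable f := integrable_Zfun lam hlam.le
  -- value of ∫ g
  have hsum_eq : (1 / Real.sqrt (2 * Real.pi)) * ∫ x, g x
      = ∑ k ∈ Finset.range n, u k lam := by
    rw [hg, integral_finset_sum _ fun k _ => hgk k, Finset.mul_sum]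
    refine Finset.sum_congr rfl fun k _ => ?_
    have : (fun x : ℝ =>
        Real.exp (-x ^ 2 / 2) * ((-(lam / 24)) ^ k * x ^ (4 * k) / (Nat.factorial k : ℝ)))
        = fun x : ℝ => ((-(lam / 24)) ^ k / (Nat.factorial k : ℝ)) *
          (x ^ (4 * k) * Real.exp (-x ^ 2 / 2)) := by
      funext x; ring
    rw [this, integral_const_mul, gauss_moment k, u]
    have hGamma : Real.Gamma (2 * k + 1 / 2) = Real.Gamma (1 / 2 + 2 * k) := by
      rw [add_comm]
    rw [hGamma]
    have hsqrt : Real.sqrt (2 * Real.pi) = Real.sqrt 2 * Real.sqrt Real.pi :=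
      Real.sqrt_mul (by norm_num) _
    have h2 : (0:ℝ) < Real.sqrt 2 := Real.sqrt_pos.2 (by norm_num)
    have hpi : (0:ℝ) < Real.sqrt Real.pi := Real.sqrt_pos.2 Real.pi_pos
    have h6 : ((-(lam / 24)) ^ k : ℝ) * 4 ^ k = (-1) ^ k * (lam / 6) ^ k := by
      rw [← mul_pow, ← mul_pow]; congr 1; ring
    have key : (1:ℝ) / Real.sqrt (2 * Real.pi) * Real.sqrt 2 = 1 / Real.sqrt Real.pi := by
      rw [hsqrt]; field_simp
    linear_combination (Real.Gamma (1/2 + 2*(k:ℝ)) / (Nat.factorial k : ℝ) *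
        (-(lam / 24)) ^ k * 4 ^ k) * key +
      (1 / Real.sqrt Real.pi / (Nat.factorial k : ℝ) * Real.Gamma (1/2 + 2*(k:ℝ))) * h6
  -- pointwise bound
  have hpt : ∀ x : ℝ, |f x - g x| ≤
      (lam / 24) ^ n / (Nat.factorial n : ℝ) * (x ^ (4 * n) * Real.exp (-x ^ 2 / 2)) := by
    intro x
    have hw : (0:ℝ) ≤ lam / 24 * x ^ 4 := by positivity
    have ht := exp_taylor_bound n (lam / 24 * x ^ 4) hw
    have hfx : f x = Real.exp (-x ^ 2 / 2) * Real.exp (-(lam / 24 * x ^ 4)) := by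
      rw [hf, ← Real.exp_add]; ring_nf
    have hgx : g x = Real.exp (-x ^ 2 / 2) *
        ∑ k ∈ Finset.range n, (-(lam / 24 * x ^ 4)) ^ k / (Nat.factorial k : ℝ) := by
      rw [hg, Finset.mul_sum]
      refine Finset.sum_congr rfl fun k _ => ?_
      rw [show (-(lam / 24 * x ^ 4)) ^ k = (-(lam / 24)) ^ k * (x ^ 4) ^ k from by
        rw [← mul_pow]; congr 1; ring, ← pow_mul]
    rw [hfx, hgx, ← mul_sub, abs_mul, abs_of_nonneg (Real.exp_pos _).le]
    calc Real.exp (-x ^ 2 / 2) *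
        |Real.exp (-(lam / 24 * x ^ 4)) -
          ∑ k ∈ Finset.range n, (-(lam / 24 * x ^ 4)) ^ k / (Nat.factorial k : ℝ)|
        ≤ Real.exp (-x ^ 2 / 2) * ((lam / 24 * x ^ 4) ^ n / (Nat.factorial n : ℝ)) :=
          mul_le_mul_of_nonneg_left ht (Real.exp_pos _).le
      _ = (lam / 24) ^ n / (Nat.factorial n : ℝ) * (x ^ (4 * n) * Real.exp (-x ^ 2 / 2)) := by
          rw [mul_pow, ← pow_mul]; ring
  have hbint : Integrable (fun x : ℝ =>
      (lam / 24) ^ n / (Nat.factorial n : ℝ) * (x ^ (4 * n) * Real.exp (-x ^ 2 / 2))) :=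
    (integrable_mom n).const_mul _
  have habs : |∫ x, (f x - g x)| ≤
      (lam / 24) ^ n / (Nat.factorial n : ℝ) * (4 ^ n * Real.sqrt 2 *
        Real.Gamma (2 * n + 1 / 2)) := by
    have h := norm_integral_le_of_norm_le hbint
      (Filter.Eventually.of_forall fun x => by
        rw [Real.norm_eq_abs]; exact hpt x)
    rw [Real.norm_eq_abs] at h
    refine h.trans ?_
    rw [integral_const_mul, gauss_moment n]
  have hzero : (0:ℝ) < Real.sqrt (2 * Real.pi) :=
    Real.sqrt_pos.2 (by positivity)
  have hZdiff : Z lam - ∑ k ∈ Finset.range n, u k lam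
      = (1 / Real.sqrt (2 * Real.pi)) * ∫ x, (f x - g x) := by
    rw [Z, integral_sub hfint hgint, ← hsum_eq, mul_sub]
  rw [hZdiff, abs_mul, abs_of_nonneg (by positivity : (0:ℝ) ≤ 1 / Real.sqrt (2 * Real.pi))]
  have step := mul_le_mul_of_nonneg_left habs
    (by positivity : (0:ℝ) ≤ 1 / Real.sqrt (2 * Real.pi))
  refine step.trans ?_
  have hsqrt : Real.sqrt (2 * Real.pi) = Real.sqrt 2 * Real.sqrt Real.pi :=
    Real.sqrt_mul (by norm_num) _
  have h2 : (0:ℝ) < Real.sqrt 2 := Real.sqrt_pos.2 (by norm_num)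
  have hpi : (0:ℝ) < Real.sqrt Real.pi := Real.sqrt_pos.2 Real.pi_pos
  have key : (1:ℝ) / Real.sqrt (2 * Real.pi) * Real.sqrt 2 = 1 / Real.sqrt Real.pi := by
    rw [hsqrt]; field_simp
  have h6 : ((lam / 24) ^ n : ℝ) * 4 ^ n = (lam / 6) ^ n := by
    rw [← mul_pow]; congr 1; ring
  have : (1 / Real.sqrt (2 * Real.pi)) * ((lam / 24) ^ n / (Nat.factorial n : ℝ) *
      (4 ^ n * Real.sqrt 2 * Real.Gamma (2 * n + 1 / 2)))
      = 1 / Real.sqrt Real.pi * (lam / 6) ^ n * Real.Gamma (2 * n + 1 / 2)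
        / (Nat.factorial n : ℝ) := by
    linear_combination (Real.Gamma (2*(n:ℝ) + 1/2) / (Nat.factorial n : ℝ) *
        (lam / 24) ^ n * 4 ^ n) * key +
      (1 / Real.sqrt Real.pi / (Nat.factorial n : ℝ) * Real.Gamma (2*(n:ℝ) + 1/2)) * h6
  rw [this]

lemma gamma_half_le (n : ℕ) (hn : 1 ≤ n) :
    Real.Gamma (2 * n + 1 / 2) ≤ ((2 * n).factorial : ℝ) / Real.sqrt (2 * n) := by
  have hn' : (1:ℝ) ≤ (n:ℝ) := by exact_mod_cast hn
  have h2n : (0:ℝ) < 2 * (n:ℝ) := by linarith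
  have hmemA : (2 * (n:ℝ)) ∈ Set.Ioi (0:ℝ) := h2n
  have hmemB : (2 * (n:ℝ) + 1) ∈ Set.Ioi (0:ℝ) := by simp only [Set.mem_Ioi]; linarith
  have hconv := Real.convexOn_log_Gamma.2 hmemA hmemB
    (by norm_num : (0:ℝ) ≤ 1/2) (by norm_num : (0:ℝ) ≤ 1/2) (by norm_num)
  simp only [smul_eq_mul, Function.comp_apply] at hconv
  have hmid : (1/2 : ℝ) * (2 * n) + 1/2 * (2 * n + 1) = 2 * n + 1/2 := by ring
  rw [hmid] at hconv
  set A := Real.Gamma (2 * (n:ℝ)) with hA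
  set B := Real.Gamma (2 * (n:ℝ) + 1) with hB
  set M := Real.Gamma (2 * (n:ℝ) + 1/2) with hM
  have hApos : 0 < A := Real.Gamma_pos_of_pos h2n
  have hBpos : 0 < B := Real.Gamma_pos_of_pos (by linarith)
  have hMpos : 0 < M := Real.Gamma_pos_of_pos (by linarith)
  -- M^2 ≤ A * B
  have hsq : M ^ 2 ≤ A * B := by
    have h1 : Real.log (M ^ 2) = 2 * Real.log M := by
      rw [Real.log_pow]; push_cast; ring
    have h2 : Real.log (M ^ 2) ≤ Real.log A + Real.log B := by
      rw [h1]; linarith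
    calc M ^ 2 = Real.exp (Real.log (M ^ 2)) := (Real.exp_log (by positivity)).symm
      _ ≤ Real.exp (Real.log A + Real.log B) := Real.exp_le_exp.2 h2
      _ = A * B := by rw [Real.exp_add, Real.exp_log hApos, Real.exp_log hBpos]
  -- B = (2n)!, A = B / (2n)
  have hBfac : B = ((2 * n).factorial : ℝ) := by
    rw [hB, show (2 * (n:ℝ) + 1) = ((2 * n : ℕ) : ℝ) + 1 by push_cast; ring,
      Real.Gamma_nat_eq_factorial]
  have hAB : B = 2 * (n:ℝ) * A := by
    rw [hB, hA, ← Real.Gamma_add_one (ne_of_gt h2n)]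
  have hs2n : (0:ℝ) < Real.sqrt (2 * n) := Real.sqrt_pos.2 h2n
  have hsq2 : M ^ 2 ≤ (((2 * n).factorial : ℝ) / Real.sqrt (2 * n)) ^ 2 := by
    have : (((2 * n).factorial : ℝ) / Real.sqrt (2 * n)) ^ 2 = B ^ 2 / (2 * n) := by
      rw [div_pow, Real.sq_sqrt h2n.le, hBfac]
    rw [this]
    have hABeq : A * B = B ^ 2 / (2 * n) := by
      field_simp [hAB]; linarith [hAB]
    linarith [hsq, hABeq.symm.le]
  have hrhs : (0:ℝ) ≤ ((2 * n).factorial : ℝ) / Real.sqrt (2 * n) := by positivity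
  exact (pow_le_pow_iff_left₀ hMpos.le hrhs (by norm_num)).1 hsq2

lemma central_fac (n : ℕ) : (((2 * n).factorial : ℕ) : ℝ) ≤ 4 ^ n * ((n.factorial : ℝ)) ^ 2 := by
  have hchoose : (2 * n).choose n ≤ 4 ^ n := by
    have h1 : (2 * n).choose n ≤ ∑ i ∈ Finset.range (2 * n + 1), (2 * n).choose i :=
      Finset.single_le_sum (f := fun i => (2 * n).choose i) (fun i _ => Nat.zero_le _)
        (Finset.mem_range.2 (by omega))
    rw [Nat.sum_range_choose] at h1
    calc (2 * n).choose n ≤ 2 ^ (2 * n) := h1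
      _ = 4 ^ n := by rw [pow_mul]; norm_num
  have hfac : (2 * n).factorial = (2 * n).choose n * n.factorial * n.factorial := by
    have := Nat.choose_mul_factorial_mul_factorial (show n ≤ 2 * n by omega)
    rw [show 2 * n - n = n by omega] at this
    omega
  rw [hfac]
  push_cast
  have h4 : ((2 * n).choose n : ℝ) ≤ 4 ^ n := by exact_mod_cast hchoose
  calc ((2 * n).choose n : ℝ) * n.factorial * n.factorial
      ≤ 4 ^ n * n.factorial * n.factorial := by gcongr
    _ = 4 ^ n * (n.factorial : ℝ) ^ 2 := by ring

lemma stirling_upper (n : ℕ) (hn : 1 ≤ n) :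
    (n.factorial : ℝ) ≤ Real.exp 1 / Real.sqrt 2 *
      (Real.sqrt (2 * n) * ((n : ℝ) / Real.exp 1) ^ n) := by
  obtain ⟨m, rfl⟩ := Nat.exists_eq_add_of_le hn
  have h := Stirling.stirlingSeq'_antitone (Nat.zero_le m)
  simp only [Function.comp_apply] at h
  rw [Stirling.stirlingSeq_one] at h
  have hpos : (0:ℝ) < Real.sqrt (2 * (1 + m : ℕ)) * (((1 + m : ℕ) : ℝ) / Real.exp 1) ^ (1 + m) := by
    have : (0:ℝ) < ((1 + m : ℕ) : ℝ) := by positivity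
    positivity
  have hdef : Stirling.stirlingSeq (1 + m) = ((1 + m : ℕ).factorial : ℝ) /
      (Real.sqrt (2 * (1 + m : ℕ)) * (((1 + m : ℕ) : ℝ) / Real.exp 1) ^ (1 + m)) := by
    rw [Stirling.stirlingSeq]
  have h2 : Stirling.stirlingSeq (m + 1) = Stirling.stirlingSeq (1 + m) := by rw [add_comm]
  rw [h2, hdef, div_le_iff₀ hpos] at h
  exact h

lemma arith (lam : ℝ) (h0 : 0 < lam) (h1 : lam < 1) :
    1 / Real.sqrt Real.pi * (lam / 6) ^ ⌊3 / (2 * lam)⌋₊ *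
      Real.Gamma (2 * ⌊3 / (2 * lam)⌋₊ + 1 / 2) / (Nat.factorial ⌊3 / (2 * lam)⌋₊ : ℝ)
      ≤ (Real.exp 1 * Real.exp 1) * Real.exp (-3 / (2 * lam)) := by
  set t : ℝ := 3 / (2 * lam) with htdef
  set n : ℕ := ⌊t⌋₊ with hndef
  have htpos : 0 < t := by positivity
  have ht32 : 3 / 2 < t := by
    rw [htdef]
    rw [div_lt_div_iff₀ (by norm_num) (by positivity)]
    nlinarith
  have hn1 : 1 ≤ n := Nat.le_floor (by push_cast; linarith)
  have hnt : (n:ℝ) ≤ t := Nat.floor_le htpos.le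
  have hnt' : t < n + 1 := Nat.lt_floor_add_one t
  have hncast : (1:ℝ) ≤ (n:ℝ) := by exact_mod_cast hn1
  have he : (0:ℝ) < Real.exp 1 := Real.exp_pos 1
  have hsp : (0:ℝ) < Real.sqrt Real.pi := Real.sqrt_pos.2 Real.pi_pos
  have hs2 : (0:ℝ) < Real.sqrt 2 := Real.sqrt_pos.2 (by norm_num)
  have hs2n : (0:ℝ) < Real.sqrt (2 * n) := Real.sqrt_pos.2 (by positivity)
  have hfn : (0:ℝ) < (n.factorial : ℝ) := by exact_mod_cast Nat.factorial_pos n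
  have ha : (0:ℝ) ≤ (lam / 6) ^ n := by positivity
  have step1 : 1 / Real.sqrt Real.pi * (lam / 6) ^ n *
      Real.Gamma (2 * n + 1 / 2) / (n.factorial : ℝ)
      ≤ 1 / Real.sqrt Real.pi * (lam / 6) ^ n *
        (((2 * n).factorial : ℝ) / Real.sqrt (2 * n)) / (n.factorial : ℝ) := by
    gcongr
    exact gamma_half_le n hn1
  have step2 : 1 / Real.sqrt Real.pi * (lam / 6) ^ n *
        (((2 * n).factorial : ℝ) / Real.sqrt (2 * n)) / (n.factorial : ℝ)
      ≤ 1 / Real.sqrt Real.pi * (lam / 6) ^ n *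
        ((4 ^ n * ((n.factorial : ℝ)) ^ 2) / Real.sqrt (2 * n)) / (n.factorial : ℝ) := by
    gcongr
    exact central_fac n
  have step3 : 1 / Real.sqrt Real.pi * (lam / 6) ^ n *
        ((4 ^ n * ((n.factorial : ℝ)) ^ 2) / Real.sqrt (2 * n)) / (n.factorial : ℝ)
      = 1 / Real.sqrt Real.pi * ((lam / 6) ^ n * 4 ^ n) * (n.factorial : ℝ)
          / Real.sqrt (2 * n) := by
    field_simp
  have step4 : 1 / Real.sqrt Real.pi * ((lam / 6) ^ n * 4 ^ n) * (n.factorial : ℝ)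
          / Real.sqrt (2 * n)
      ≤ 1 / Real.sqrt Real.pi * ((lam / 6) ^ n * 4 ^ n) *
          (Real.exp 1 / Real.sqrt 2 * (Real.sqrt (2 * n) * ((n : ℝ) / Real.exp 1) ^ n))
          / Real.sqrt (2 * n) := by
    gcongr
    exact stirling_upper n hn1
  have step5 : 1 / Real.sqrt Real.pi * ((lam / 6) ^ n * 4 ^ n) *
          (Real.exp 1 / Real.sqrt 2 * (Real.sqrt (2 * n) * ((n : ℝ) / Real.exp 1) ^ n))
          / Real.sqrt (2 * n)
      = Real.exp 1 / (Real.sqrt 2 * Real.sqrt Real.pi) *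
          ((lam / 6) ^ n * 4 ^ n * ((n : ℝ) / Real.exp 1) ^ n) := by
    field_simp
  have hprod : (lam / 6) ^ n * 4 ^ n * ((n : ℝ) / Real.exp 1) ^ n
      = ((n : ℝ) / (t * Real.exp 1)) ^ n := by
    rw [← mul_pow, ← mul_pow]
    congr 1
    rw [htdef]
    field_simp
    ring
  have hpow_le : ((n : ℝ) / (t * Real.exp 1)) ^ n ≤ (1 / Real.exp 1) ^ n := by
    apply pow_le_pow_left₀ (by positivity)
    rw [div_le_div_iff₀ (by positivity) he]
    nlinarith
  have hexp_eq : ((1 : ℝ) / Real.exp 1) ^ n = Real.exp (-(n : ℝ)) := by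
    rw [one_div, ← Real.exp_neg, ← Real.exp_nat_mul]
    congr 1
    ring
  have hexp_le : Real.exp (-(n : ℝ)) ≤ Real.exp 1 * Real.exp (-t) := by
    rw [← Real.exp_add]
    apply Real.exp_le_exp.2
    linarith
  have hconst : Real.exp 1 / (Real.sqrt 2 * Real.sqrt Real.pi) ≤ Real.exp 1 := by
    apply div_le_self he.le
    have h2' : (1:ℝ) ≤ Real.sqrt 2 := by
      rw [show (1:ℝ) = Real.sqrt 1 by rw [Real.sqrt_one]]
      exact Real.sqrt_le_sqrt (by norm_num)
    have hp' : (1:ℝ) ≤ Real.sqrt Real.pi := by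
      rw [show (1:ℝ) = Real.sqrt 1 by rw [Real.sqrt_one]]
      exact Real.sqrt_le_sqrt (by linarith [Real.pi_gt_three])
    nlinarith
  have hneg : -3 / (2 * lam) = -t := by rw [htdef]; ring
  rw [hneg]
  calc 1 / Real.sqrt Real.pi * (lam / 6) ^ n *
      Real.Gamma (2 * n + 1 / 2) / (n.factorial : ℝ)
      ≤ 1 / Real.sqrt Real.pi * ((lam / 6) ^ n * 4 ^ n) * (n.factorial : ℝ)
          / Real.sqrt (2 * n) := by
        rw [← step3]; exact step1.trans step2
    _ ≤ Real.exp 1 / (Real.sqrt 2 * Real.sqrt Real.pi) *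
          ((lam / 6) ^ n * 4 ^ n * ((n : ℝ) / Real.exp 1) ^ n) := by
        rw [← step5]; exact step4
    _ = Real.exp 1 / (Real.sqrt 2 * Real.sqrt Real.pi) *
          ((n : ℝ) / (t * Real.exp 1)) ^ n := by rw [hprod]
    _ ≤ Real.exp 1 / (Real.sqrt 2 * Real.sqrt Real.pi) * Real.exp (-(n : ℝ)) := by
        have := hpow_le.trans hexp_eq.le
        exact mul_le_mul_of_nonneg_left this (by positivity)
    _ ≤ Real.exp 1 * (Real.exp 1 * Real.exp (-t)) := by
        apply mul_le_mul hconst hexp_le (Real.exp_pos _).le he.le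
    _ = Real.exp 1 * Real.exp 1 * Real.exp (-t) := by ring

/-- Superasymptotic expansion: truncating the perturbative series of `Z(λ)` at the
optimal index `⌊3/(2λ)⌋` leaves an exponentially small remainder. -/
theorem superasymptotic_expansion :
    ∃ C > (0 : ℝ), ∃ δ > (0 : ℝ), ∀ lam : ℝ, 0 < lam → lam < δ →
      |Z lam - ∑ k ∈ Finset.range ⌊3 / (2 * lam)⌋₊, u k lam| ≤
        C * Real.exp (-3 / (2 * lam)) := by
  refine ⟨Real.exp 1 * Real.exp 1, by positivity, 1, by norm_num, fun lam hl hl1 => ?_⟩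
  exact (remainder_bound lam hl _).trans (arith lam hl hl1)

end
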